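/- For the set-graph G = G_{A^(n)} with n ≥ 2, the maximum degree equals twice the minimum degree: Δ(G) = 2·δ(G). -/

import Mathlib

/-- The set-graph `G_{A^(n)}`: vertices are the nonempty subsets of an `n`-element set,
two distinct vertices being adjacent iff the corresponding subsets intersect. -/
def setGraph (n : ℕ) : SimpleGraph {S : Finset (Fin n) // S.Nonempty} where
  Adj S T := S ≠ T ∧ (S.1 ∩ T.1).Nonempty
  symm := ⟨fun S T h => ⟨h.1.symm, by
    obtain ⟨_, h2⟩ := h
    rwa [Finset.inter_comm]⟩⟩
  loopless := ⟨fun S h => h.1 rfl⟩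

instance (n : ℕ) : DecidableRel (setGraph n).Adj := fun S T =>
  inferInstanceAs (Decidable (S ≠ T ∧ (S.1 ∩ T.1).Nonempty))


lemma setGraph_degree (n : ℕ) (S : {S : Finset (Fin n) // S.Nonempty}) :
    (setGraph n).degree S = 2 ^ n - 2 ^ (n - S.1.card) - 1 := by
  classical
  have h1 : (setGraph n).degree S =
      (Finset.univ.filter (fun T : Finset (Fin n) => T ≠ S.1 ∧ (S.1 ∩ T).Nonempty)).card := by
    rw [← SimpleGraph.card_neighborFinset_eq_degree]
    apply Finset.card_bij (fun T _ => T.1)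
    · intro T hT
      rw [SimpleGraph.mem_neighborFinset] at hT
      obtain ⟨hne, hint⟩ := hT
      simp only [Finset.mem_filter, Finset.mem_univ, true_and]
      exact ⟨fun h => hne (Subtype.ext h.symm), hint⟩
    · intro T₁ _ T₂ _ h
      exact Subtype.ext h
    · intro T hT
      simp only [Finset.mem_filter, Finset.mem_univ, true_and] at hT
      obtain ⟨hne, hint⟩ := hT
      refine ⟨⟨T, ?_⟩, ?_, rfl⟩
      · obtain ⟨x, hx⟩ := hint
        exact ⟨x, (Finset.mem_inter.mp hx).2⟩
      · rw [SimpleGraph.mem_neighborFinset]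
        exact ⟨fun h => hne (congrArg Subtype.val h).symm, hint⟩
  rw [h1]
  have h2 : (Finset.univ.filter (fun T : Finset (Fin n) => T ≠ S.1 ∧ (S.1 ∩ T).Nonempty))
      = (Finset.univ.filter (fun T : Finset (Fin n) => (S.1 ∩ T).Nonempty)).erase S.1 := by
    ext T
    simp only [Finset.mem_filter, Finset.mem_univ, true_and, Finset.mem_erase]
  rw [h2, Finset.card_erase_of_mem (Finset.mem_filter.mpr
    ⟨Finset.mem_univ _, by simpa using S.2⟩)]
  congr 1
  have h3 : (Finset.univ.filter (fun T : Finset (Fin n) => (S.1 ∩ T).Nonempty))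
      = Finset.univ \ (S.1ᶜ).powerset := by
    ext T
    simp only [Finset.mem_filter, Finset.mem_univ, true_and, Finset.mem_sdiff,
      Finset.mem_powerset]
    rw [Finset.nonempty_iff_ne_empty, Ne, ← Finset.disjoint_iff_inter_eq_empty]
    exact not_congr ⟨fun hd a ha => Finset.mem_compl.mpr
        fun hb => Finset.disjoint_left.mp hd hb ha,
      fun hsub => Finset.disjoint_left.mpr
        fun a ha hb => Finset.mem_compl.mp (hsub hb) ha⟩
  rw [h3, Finset.card_sdiff_of_subset (Finset.subset_univ _), Finset.card_powerset,
    Finset.card_compl, Finset.card_univ, Fintype.card_finset, Fintype.card_fin]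

theorem stmt_1 (n : ℕ) (hn : 2 ≤ n) :
    (setGraph n).maxDegree = 2 * (setGraph n).minDegree := by
  have hpos : 0 < n := by omega
  have hne : Nonempty {S : Finset (Fin n) // S.Nonempty} :=
    ⟨⟨{⟨0, hpos⟩}, Finset.singleton_nonempty _⟩⟩
  have hmax : (setGraph n).maxDegree = 2 ^ n - 2 := by
    apply le_antisymm
    · apply SimpleGraph.maxDegree_le_of_forall_degree_le
      intro v
      rw [setGraph_degree]
      have h1 : 1 ≤ 2 ^ (n - v.1.card) := Nat.one_le_two_pow
      omega
    · haveI : Nonempty (Fin n) := ⟨⟨0, hpos⟩⟩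
      have := SimpleGraph.degree_le_maxDegree (setGraph n)
        ⟨Finset.univ, Finset.univ_nonempty⟩
      rw [setGraph_degree] at this
      simp [Finset.card_univ] at this
      omega
  have hmin : (setGraph n).minDegree = 2 ^ (n - 1) - 1 := by
    apply le_antisymm
    · have := SimpleGraph.minDegree_le_degree (setGraph n)
        ⟨{⟨0, hpos⟩}, Finset.singleton_nonempty _⟩
      rw [setGraph_degree] at this
      have h2 : 2 ^ (n-1) * 2 = 2 ^ n := by
        rw [← pow_succ]; congr 1; omega
      simp only [Finset.card_singleton] at this
      omega
    · apply SimpleGraph.le_minDegree_of_forall_le_degree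
      intro v
      rw [setGraph_degree]
      have hk : 1 ≤ v.1.card := Finset.card_pos.mpr v.2
      have h2 : 2 ^ (n - v.1.card) ≤ 2 ^ (n - 1) :=
        Nat.pow_le_pow_right (by omega) (by omega)
      have h3 : 2 ^ (n-1) * 2 = 2 ^ n := by
        rw [← pow_succ]; congr 1; omega
      omega
  rw [hmax, hmin]
  have h3 : 2 ^ (n-1) * 2 = 2 ^ n := by
    rw [← pow_succ]; congr 1; omega
  have h1 : 1 ≤ 2 ^ (n-1) := Nat.one_le_two_pow
  omega
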